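/- arXiv:1711.02589 — 3 statements merged into one kernel-verified Lean document; each statement's English description precedes it below -/
import Mathlib

section
/- The operator L^γ satisfies the positive maximum principle: for every γ ∈ [0,+∞] and every f ∈ D^γ, if x₀ ∈ ℝ̈ is such that sup_{x ∈ ℝ̈} f(x) = f(x₀) ≥ 0, then L^γ f(x₀) ≤ 0, i.e. f″(x₀) ≤ 0. -/
open MeasureTheory ProbabilityTheory Filter Set
open scoped NNReal ENNReal Topology

noncomputable section

/-- The space `ℝ̈ = (-∞,0⁻] ∪ [0⁺,+∞)`, the disjoint union of two half-lines.
A point is encoded by the half-line it belongs to (`side = true` for the positive one)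
and its distance `rad` to the origin. -/
structure Rddot where
  side : Bool
  rad : ℝ≥0

namespace Rddot

/-- The natural projection `π̈ : ℝ̈ → ℝ` (identifying `0⁺` and `0⁻` with `0`). -/
def val (x : Rddot) : ℝ := if x.side then (x.rad : ℝ) else -(x.rad : ℝ)

/-- An auxiliary `{0,1}`-valued marker of the side, used to define the metric
`d(x,y) = |x - y| + 1_{xy ≤ 0}` on `ℝ̈`. -/
def ind (x : Rddot) : ℝ := if x.side then 0 else 1

/-- `|x|`, the distance of `x ∈ ℝ̈` to the origin. -/
def abs (x : Rddot) : ℝ := (x.rad : ℝ)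

instance : MeasurableSpace Rddot := MeasurableSpace.comap (fun x => (x.side, x.rad)) inferInstance

lemma eq_of_val_ind {x y : Rddot} (hv : x.val = y.val) (hi : x.ind = y.ind) : x = y := by
  rcases x with ⟨bx, rx⟩
  rcases y with ⟨by', ry⟩
  cases bx <;> cases by' <;> simp_all [val, ind]

/-- The metric `d(x,y) = |x-y| + 1_{xy ≤ 0}` on `ℝ̈`: the distance between the real
projections, plus `1` if the two points lie on different half-lines. -/
noncomputable instance : MetricSpace Rddot where
  dist x y := |x.val - y.val| + |x.ind - y.ind|
  dist_self x := by simp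
  dist_comm x y := by simp [abs_sub_comm]
  dist_triangle x y z := by
    show |x.val - z.val| + |x.ind - z.ind| ≤
      (|x.val - y.val| + |x.ind - y.ind|) + (|y.val - z.val| + |y.ind - z.ind|)
    have h1 : |x.val - z.val| ≤ |x.val - y.val| + |y.val - z.val| := abs_sub_le _ _ _
    have h2 : |x.ind - z.ind| ≤ |x.ind - y.ind| + |y.ind - z.ind| := abs_sub_le _ _ _
    linarith
  eq_of_dist_eq_zero := by
    intro x y h
    have h' : |x.val - y.val| + |x.ind - y.ind| = 0 := h
    have h1 : |x.val - y.val| = 0 := by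
      have := abs_nonneg (x.val - y.val)
      have := abs_nonneg (x.ind - y.ind)
      linarith
    have h2 : |x.ind - y.ind| = 0 := by
      have := abs_nonneg (x.val - y.val)
      have := abs_nonneg (x.ind - y.ind)
      linarith
    exact eq_of_val_ind (sub_eq_zero.mp (abs_eq_zero.mp h1))
      (sub_eq_zero.mp (abs_eq_zero.mp h2))

end Rddot

/-- A path indexed by `ℝ≥0` is càdlàg: right-continuous with left limits. -/
def CadlagOn {E : Type*} [TopologicalSpace E] (f : ℝ≥0 → E) : Prop :=
  (∀ t : ℝ≥0, ContinuousWithinAt f (Set.Ici t) t) ∧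
  (∀ t : ℝ≥0, 0 < t → ∃ l : E, Filter.Tendsto f (nhdsWithin t (Set.Iio t)) (nhds l))

/-- The natural filtration of a process `X`: `σ(X_u, u ≤ t)`. -/
def natSigma {Ω E : Type*} [MeasurableSpace E] (X : ℝ≥0 → Ω → E) (t : ℝ≥0) :
    MeasurableSpace Ω :=
  ⨆ u ∈ Set.Iic t, MeasurableSpace.comap (X u) inferInstance

/-- `M` is a martingale with respect to the filtration generated by the process `X`. -/
def IsMartingaleNat {Ω E : Type*} [MeasurableSpace Ω] [MeasurableSpace E] (P : Measure Ω)
    (X : ℝ≥0 → Ω → E) (M : ℝ≥0 → Ω → ℝ) : Prop :=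
  (∀ t, Integrable (M t) P) ∧
  (∀ t, Measurable[natSigma X t] (M t)) ∧
  ∀ s t : ℝ≥0, s ≤ t → P[M t|natSigma X s] =ᵐ[P] M s

/-- `X` is a Markov process (with respect to its natural filtration). -/
def IsMarkovProc {Ω E : Type*} [MeasurableSpace Ω] [MeasurableSpace E] (P : Measure Ω)
    (X : ℝ≥0 → Ω → E) : Prop :=
  ∀ s t : ℝ≥0, s ≤ t → ∀ g : E → ℝ, Measurable g → (∀ x, |g x| ≤ 1) →
    P[(fun ω => g (X t ω))|natSigma X s]
      =ᵐ[P] P[(fun ω => g (X t ω))|MeasurableSpace.comap (X s) inferInstance]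

/-- The domain `𝒟^γ` of the generator of partially reflected Brownian motion with
permeability `γ ∈ [0,∞]`: functions on `ℝ̈` vanishing at infinity, twice continuously
differentiable on each half-line (`pos` and `neg` are the restrictions to `[0⁺,∞)` and
`(-∞,0⁻]`, the latter reparametrized by the distance to the origin), and satisfying the
transmission condition `f'(0⁻) = f'(0⁺) = γ (f(0⁺) - f(0⁻))` (for `γ = ∞` this means
`f'(0⁻) = f'(0⁺)` and `f(0⁺) = f(0⁻)`). -/
structure DomGamma (γ : ℝ≥0∞) where
  pos : ℝ → ℝ
  neg : ℝ → ℝ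
  contDiff_pos : ContDiffOn ℝ 2 pos (Set.Ici 0)
  contDiff_neg : ContDiffOn ℝ 2 neg (Set.Ici 0)
  vanish_pos : Filter.Tendsto pos Filter.atTop (nhds 0)
  vanish_neg : Filter.Tendsto neg Filter.atTop (nhds 0)
  /-- `f'(0⁻) = f'(0⁺)`; note that `f'(0⁻) = - neg'(0)` since `neg` is parametrized by
  the distance to the origin. -/
  deriv_eq : -(derivWithin neg (Set.Ici 0) 0) = derivWithin pos (Set.Ici 0) 0
  /-- `f'(0⁺) = γ (f(0⁺) - f(0⁻))`, and for `γ = ∞`, `f(0⁺) = f(0⁻)`. -/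
  transmission : if γ = ⊤ then pos 0 = neg 0
    else derivWithin pos (Set.Ici 0) 0 = γ.toReal * (pos 0 - neg 0)

namespace DomGamma

variable {γ : ℝ≥0∞}

/-- Evaluation of an element of `𝒟^γ` as a function on `ℝ̈`. -/
def eval (f : DomGamma γ) (x : Rddot) : ℝ := if x.side then f.pos x.abs else f.neg x.abs

/-- The second derivative `f''` of `f ∈ 𝒟^γ` at a point of `ℝ̈` (one-sided at `0⁺`, `0⁻`). -/
def d2 (f : DomGamma γ) (x : Rddot) : ℝ :=
  if x.side then iteratedDerivWithin 2 f.pos (Set.Ici 0) x.abs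
  else iteratedDerivWithin 2 f.neg (Set.Ici 0) x.abs

end DomGamma

/-- The generator `L^γ f = (σ²/2) f''` on `𝒟^γ`. -/
def generator (γ : ℝ≥0∞) (σ2 : ℝ) (f : DomGamma γ) (x : Rddot) : ℝ := σ2 / 2 * f.d2 x

/-- `X` is a solution of the martingale problem associated with `L^γ` (with `σ² = σ2`):
a càdlàg `ℝ̈`-valued Markov process such that for every `f ∈ 𝒟^γ`,
`f(X_t) - ∫₀ᵗ L^γ f(X_s) ds` is a martingale for the filtration generated by `X`. -/
def SolvesMP {Ω : Type*} [MeasurableSpace Ω] (γ : ℝ≥0∞) (σ2 : ℝ) (P : Measure Ω)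
    (X : ℝ≥0 → Ω → Rddot) : Prop :=
  (∀ t, Measurable (X t)) ∧
  (∀ᵐ ω ∂P, CadlagOn fun t => X t ω) ∧
  IsMarkovProc P X ∧
  ∀ f : DomGamma γ, IsMartingaleNat P X
    (fun t ω => f.eval (X t ω) - ∫ s in (0:ℝ)..(t:ℝ), generator γ σ2 f (X s.toNNReal ω))

/-- The law of the path of a process, as a measure on the (Skorokhod) path space. -/
def pathLaw {Ω E : Type*} [MeasurableSpace Ω] [MeasurableSpace E] (P : Measure Ω)
    (X : ℝ≥0 → Ω → E) : Measure (ℝ≥0 → E) := P.map fun ω t => X t ω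

/-- `B` is a Brownian motion started from `x0` with variance parameter `σ2`:
continuous paths and independent, stationary Gaussian increments. -/
def IsBrownianMotion {Ω : Type*} [MeasurableSpace Ω] (P : Measure Ω) (B : ℝ≥0 → Ω → ℝ)
    (x0 : ℝ) (σ2 : ℝ≥0) : Prop :=
  (∀ t, Measurable (B t)) ∧
  (∀ᵐ ω ∂P, B 0 ω = x0) ∧
  (∀ᵐ ω ∂P, Continuous fun t => B t ω) ∧
  (∀ s t : ℝ≥0, s ≤ t →
    P.map (fun ω => B t ω - B s ω) = gaussianReal 0 (σ2 * (t - s))) ∧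
  ∀ (n : ℕ) (τ : Fin (n+1) → ℝ≥0), Monotone τ →
    iIndepFun
      (fun i : Fin n => fun ω => B (τ i.succ) ω - B (τ i.castSucc) ω) P

/-- Time spent by the path `g` strictly above level `c` in absolute value, up to time `u`. -/
def occAbove (c : ℝ) (g : ℝ≥0 → ℝ) (u : ℝ≥0) : ℝ :=
  ∫ s in (0:ℝ)..(u:ℝ), if c < |g s.toNNReal| then (1:ℝ) else 0

/-- Time spent by the path `g` at levels `≤ c` in absolute value, up to time `u`. -/
def occBelow (c : ℝ) (g : ℝ≥0 → ℝ) (u : ℝ≥0) : ℝ :=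
  ∫ s in (0:ℝ)..(u:ℝ), if |g s.toNNReal| ≤ c then (1:ℝ) else 0

/-- The time change `τ(t) = inf{u > 0 : ∫₀ᵘ 1_{|g_s| > c} ds > t}`. -/
def tauTC (c : ℝ) (g : ℝ≥0 → ℝ) (t : ℝ≥0) : ℝ≥0 := sInf {u : ℝ≥0 | (t:ℝ) < occAbove c g u}

/-- The time change `θ(t) = inf{u > 0 : ∫₀ᵘ 1_{|g_s| ≤ c} ds > t}`. -/
def thetaTC (c : ℝ) (g : ℝ≥0 → ℝ) (t : ℝ≥0) : ℝ≥0 := sInf {u : ℝ≥0 | (t:ℝ) < occBelow c g u}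

/-- The gluing map `r : ℝ → ℝ̈`: it maps `[1/(2γ),∞)` to `[0⁺,∞)` and `(-∞,-1/(2γ)]`
to `(-∞,0⁻]` by translation, `[0,1/(2γ))` to `0⁺` and `(-1/(2γ),0)` to `0⁻`. -/
def rmap (γ : ℝ) (z : ℝ) : Rddot :=
  if 0 ≤ z then ⟨true, (z - 1/(2*γ)).toNNReal⟩ else ⟨false, (-z - 1/(2*γ)).toNNReal⟩

/-- The right inverse `r⁻¹(x) = x + sign(x)/(2γ)` of `r`. -/
def rinv (γ : ℝ) (x : Rddot) : ℝ := x.val + (if x.side then 1/(2*γ) else -(1/(2*γ)))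

/-- The "speed and scale" construction: `X_t = r(B_{τ(t)})`. -/
def speedScale {Ω : Type*} (γ : ℝ) (B : ℝ≥0 → Ω → ℝ) (t : ℝ≥0) (ω : Ω) : Rddot :=
  rmap γ (B (tauTC (1/(2*γ)) (fun s => B s ω) t) ω)

/-- The Gaussian kernel `G_t(z) = (2πt)^{-1/2} exp(-z²/(2t))`. -/
def gaussK (t z : ℝ) : ℝ := (Real.sqrt (2 * Real.pi * t))⁻¹ * Real.exp (-(z^2) / (2*t))

/-- `∫₀^∞ e^{-2γl} G_t(a+b+l) dl`. -/
def barrierInt (γ t a b : ℝ) : ℝ :=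
  ∫ l in Set.Ioi (0:ℝ), Real.exp (-(2*γ*l)) * gaussK t (a + b + l)

/-- The transition density of partially reflected Brownian motion with permeability `γ`,
as a function of `t`, `a = |x|`, `b = |y|` and of whether `x` and `y` lie on the same
half-line. -/
def transDens (γ t a b : ℝ) (same : Bool) : ℝ :=
  if same then gaussK t (a - b) + gaussK t (a + b) - 2*γ*barrierInt γ t a b
  else 2*γ*barrierInt γ t a b

/-- `(1/(2ε)) ∫₀ᵗ 1_{|h_s| ≤ ε} ds`, the approximation of the local time at the origin. -/
def localTimeApprox (h : ℝ≥0 → ℝ) (t : ℝ≥0) (ε : ℝ) : ℝ := (1/(2*ε)) * occBelow ε h t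

/-- `L` is the local time at the origin of the path `h`:
`L_t = lim_{ε↓0} (1/(2ε)) ∫₀ᵗ 1_{|h_s| ≤ ε} ds`. -/
def IsLocalTimePath (h : ℝ≥0 → ℝ) (L : ℝ≥0 → ℝ) : Prop :=
  ∀ t : ℝ≥0, Filter.Tendsto (fun ε => localTimeApprox h t ε)
    (nhdsWithin 0 (Set.Ioi 0)) (nhds (L t))

/-- `μ` is the law (on path space) of the absolute value of a Brownian motion with
variance parameter `σ2` started from `a`, i.e. of reflected Brownian motion. -/
def ReflBMLaw (a : ℝ) (σ2 : ℝ≥0) (μ : Measure (ℝ≥0 → ℝ)) : Prop :=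
  ∃ (Ω' : Type) (m' : MeasurableSpace Ω') (P' : @Measure Ω' m') (B' : ℝ≥0 → Ω' → ℝ),
    @IsProbabilityMeasure Ω' m' P' ∧ @IsBrownianMotion Ω' m' P' B' a σ2 ∧
    μ = @Measure.map Ω' (ℝ≥0 → ℝ) m' _ (fun ω t => |B' t ω|) P'

/-- `μ` is the law (on path space) of a Brownian motion with variance parameter `σ2`
started from `a`. -/
def BMLaw (a : ℝ) (σ2 : ℝ≥0) (μ : Measure (ℝ≥0 → ℝ)) : Prop :=
  ∃ (Ω' : Type) (m' : MeasurableSpace Ω') (P' : @Measure Ω' m') (B' : ℝ≥0 → Ω' → ℝ),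
    @IsProbabilityMeasure Ω' m' P' ∧ @IsBrownianMotion Ω' m' P' B' a σ2 ∧
    μ = @Measure.map Ω' (ℝ≥0 → ℝ) m' _ (fun ω t => B' t ω) P'

/-- `W` is a reflected Brownian motion started from `a`: it is distributed as the
absolute value of a standard Brownian motion started from `a`. -/
def IsReflectedBM {Ω : Type*} [MeasurableSpace Ω] (P : Measure Ω) (W : ℝ≥0 → Ω → ℝ)
    (a : ℝ) : Prop :=
  (∀ t, Measurable (W t)) ∧ ReflBMLaw a 1 (P.map fun ω t => W t ω)

/-- `N` is a Poisson process with rate `r`. -/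
def IsPoissonProcess {Ω : Type*} [MeasurableSpace Ω] (P : Measure Ω) (N : ℝ≥0 → Ω → ℕ)
    (r : ℝ≥0) : Prop :=
  (∀ t, Measurable (N t)) ∧
  (∀ᵐ ω ∂P, N 0 ω = 0) ∧
  (∀ᵐ ω ∂P, Monotone fun t => N t ω) ∧
  (∀ s t : ℝ≥0, s ≤ t →
    P.map (fun ω => N t ω - N s ω) = poissonMeasure (r * (t - s))) ∧
  ∀ (n : ℕ) (τ : Fin (n+1) → ℝ≥0), Monotone τ →
    iIndepFun
      (fun i : Fin n => fun ω => N (τ i.succ) ω - N (τ i.castSucc) ω) P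


/-- The Skorokhod distance between `f` and `g` on the time interval `[0,T]`:
the infimum over increasing time changes `λ` of
`max(sup |λ(t) - t|, sup |f(λ(t)) - g(t)|)` (here expressed via a set of admissible `ε`). -/
def dskoT (T : ℝ) (f g : ℝ≥0 → ℝ) : ℝ :=
  sInf {ε : ℝ | 0 ≤ ε ∧ ∃ lam : ℝ → ℝ, StrictMonoOn lam (Set.Icc 0 T) ∧
    ContinuousOn lam (Set.Icc 0 T) ∧ lam 0 = 0 ∧ lam T = T ∧
    ∀ t ∈ Set.Icc 0 T, |lam t - t| ≤ ε ∧ |f (lam t).toNNReal - g t.toNNReal| ≤ ε}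

/-- The metric `d_sko(f,g) = ∫₀^∞ e^{-t} (d_sko^t(f,g) ∧ 1) dt` for Skorokhod
convergence on compact time intervals. -/
def dsko (f g : ℝ≥0 → ℝ) : ℝ :=
  ∫ T in Set.Ioi (0:ℝ), Real.exp (-T) * min (dskoT T f g) 1

/-- A set of paths is (sequentially) compact for the metric `d_sko`. -/
def DSkoSeqCompact (K : Set (ℝ≥0 → ℝ)) : Prop :=
  ∀ u : ℕ → (ℝ≥0 → ℝ), (∀ k, u k ∈ K) →
    ∃ (φ : ℕ → ℕ) (g : ℝ≥0 → ℝ), StrictMono φ ∧ g ∈ K ∧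
      Filter.Tendsto (fun k => dsko (u (φ k)) g) Filter.atTop (nhds 0)

/-- Convergence in distribution, in the Skorokhod space `(D(ℝ₊,ℝ), d_sko)`, of a sequence
of processes (each defined on its own probability space) to a limiting process:
expectations of bounded measurable functionals which are `d_sko`-continuous at càdlàg
paths converge. -/
def ConvDistSkoFam (Ω : ℕ → Type) (mΩ : ∀ n, MeasurableSpace (Ω n))
    (P : ∀ n, @Measure (Ω n) (mΩ n)) (Y : ∀ n, Ω n → (ℝ≥0 → ℝ))
    {Ω' : Type*} [MeasurableSpace Ω'] (P' : Measure Ω') (Y' : Ω' → (ℝ≥0 → ℝ)) : Prop :=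
  ∀ F : (ℝ≥0 → ℝ) → ℝ, Measurable F → (∃ C, ∀ h, |F h| ≤ C) →
    (∀ h, CadlagOn h → ∀ ε : ℝ, 0 < ε → ∃ δ : ℝ, 0 < δ ∧
      ∀ h', CadlagOn h' → dsko h h' < δ → |F h' - F h| < ε) →
    Filter.Tendsto (fun n => ∫ ω, F (Y n ω) ∂(P n)) Filter.atTop
      (nhds (∫ ω, F (Y' ω) ∂P'))

/-- Jump rates of the random walk with an obstacle of width `K`:
nearest-neighbour jumps at rate `m/2`, reduced to `c m/2` on the `K` central edges
(for odd `K` the site `0` is removed and `-1`, `+1` are adjacent). -/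
def rateGen (K : ℕ) (m c : ℝ) (i j : ℤ) : ℝ :=
  if K % 2 = 0 then
    (if (i - j).natAbs = 1 then (if (K : ℤ)/2 < max |i| |j| then m/2 else c*m/2) else 0)
  else
    (if i ≠ 0 ∧ j ≠ 0 ∧ ((i - j).natAbs = 1 ∨ (i = 1 ∧ j = -1) ∨ (i = -1 ∧ j = 1)) then
      (if ((K : ℤ)+1)/2 < max |i| |j| then m/2 else c*m/2) else 0)

/-- The generator of the random walk with an obstacle:
`Qf(i) = Σ_j q(i,j)(f(j) - f(i))`. -/
def QGen (K : ℕ) (m c : ℝ) (f : ℤ → ℝ) (i : ℤ) : ℝ :=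
  rateGen K m c i (i-1) * (f (i-1) - f i) + rateGen K m c i (i+1) * (f (i+1) - f i) +
    (if i = 1 ∨ i = -1 then rateGen K m c i (-i) * (f (-i) - f i) else 0)

/-- A path with values in a discrete space is a right-continuous step function with
left limits. -/
def StepPath {E : Type*} (f : ℝ≥0 → E) : Prop :=
  (∀ t : ℝ≥0, ∃ ε : ℝ≥0, 0 < ε ∧ ∀ s, t ≤ s → s < t + ε → f s = f t) ∧
  (∀ t : ℝ≥0, 0 < t → ∃ ε : ℝ≥0, 0 < ε ∧ ε ≤ t ∧
    ∀ s s', t - ε ≤ s → s < t → t - ε ≤ s' → s' < t → f s = f s')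

/-- `ξ` is the continuous-time random walk with an obstacle of width `K`, migration rate
`m`, barrier permeability parameter `c`, started from `x0`: a right-continuous jump
process on `ℤ` solving the martingale problem for the jump rates `rateGen K m c`. -/
def IsRWGen {Ω : Type*} [MeasurableSpace Ω] (K : ℕ) (m c : ℝ) (x0 : ℤ) (P : Measure Ω)
    (ξ : ℝ≥0 → Ω → ℤ) : Prop :=
  (∀ t, Measurable (ξ t)) ∧
  (∀ᵐ ω ∂P, ξ 0 ω = x0) ∧
  (∀ᵐ ω ∂P, StepPath fun t => ξ t ω) ∧
  (K % 2 = 1 → ∀ᵐ ω ∂P, ∀ t, ξ t ω ≠ 0) ∧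
  ∀ f : ℤ → ℝ, (∃ C, ∀ i, |f i| ≤ C) →
    IsMartingaleNat P ξ
      (fun t ω => f (ξ t ω) - ∫ s in (0:ℝ)..(t:ℝ), QGen K m c f (ξ s.toNNReal ω))

/-- The rescaled random walk `X_n(t) = ξ_n(nt)/√n`, as a real-valued path. -/
def rescaledRW {Ω : Type*} (n : ℕ) (ξ : ℝ≥0 → Ω → ℤ) (ω : Ω) : ℝ≥0 → ℝ :=
  fun t => (ξ ((n : ℝ≥0) * t) ω : ℝ) / Real.sqrt n

/-- The successive crossing times of the origin of a real-valued path: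
`T_0 = 0`, `T_{i+1} = inf{t > T_i : h(T_i) h(t) < 0}`. -/
def crossTimes (h : ℝ≥0 → ℝ) : ℕ → ℝ≥0
  | 0 => 0
  | i+1 => sInf {t : ℝ≥0 | crossTimes h i < t ∧ h (crossTimes h i) * h t < 0}

/-- The successive jump times of a step path, valued in `ℝ≥0∞` (`∞` if there are no
more jumps). -/
def jumpTimes (h : ℝ≥0 → ℝ) : ℕ → ℝ≥0∞
  | 0 => 0
  | k+1 => sInf ((fun s : ℝ≥0 => (s : ℝ≥0∞)) ''
      {s : ℝ≥0 | jumpTimes h k < (s : ℝ≥0∞) ∧ h s ≠ h (jumpTimes h k).toNNReal})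

/-- The martingale part `M(t) = |h(0)| + ∫₀ᵗ 1_{|h(s)| > c} d|h|(s)` of the rescaled
walk: the sum of the increments of `|h|` over jumps happening while `|h| > c`. -/
def martPart (c : ℝ) (h : ℝ≥0 → ℝ) (t : ℝ≥0) : ℝ :=
  |h 0| + ∑' k : ℕ,
    if jumpTimes h (k+1) ≤ (t : ℝ≥0∞) then
      (if c < |h ((jumpTimes h k).toNNReal)| then
        |h ((jumpTimes h (k+1)).toNNReal)| - |h ((jumpTimes h k).toNNReal)| else 0)
    else 0

/-- The occupation time of the barrier `[-c,c]` by the path `h` up to time `t`. -/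
def occBarrier (c : ℝ) (h : ℝ≥0 → ℝ) (t : ℝ≥0) : ℝ := occBelow c h t

/-- `μ` is the law on path space of (the projection to `ℝ` of) partially reflected
Brownian motion with permeability `γ` and diffusion coefficient `σ2` started from `x`. -/
def PRBMLawStart (γ : ℝ≥0∞) (σ2 : ℝ) (x : Rddot) (μ : Measure (ℝ≥0 → ℝ)) : Prop :=
  ∃ (Ω' : Type) (m' : MeasurableSpace Ω') (P' : @Measure Ω' m') (X : ℝ≥0 → Ω' → Rddot),
    @IsProbabilityMeasure Ω' m' P' ∧ @SolvesMP Ω' m' γ σ2 P' X ∧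
    (∀ᵐ ω ∂P', X 0 ω = x) ∧
    (∀ᵐ ω ∂P', Continuous fun t => (X t ω).val) ∧
    μ = @Measure.map Ω' (ℝ≥0 → ℝ) m' _ (fun ω t => (X t ω).val) P'


lemma pmp_deriv_nonpos (g : ℝ → ℝ) (hg : DifferentiableWithinAt ℝ g (Set.Ici 0) 0)
    (hmax : ∀ b : ℝ, 0 ≤ b → g b ≤ g 0) : derivWithin g (Set.Ici 0) 0 ≤ 0 := by
  have h := hg.hasDerivWithinAt
  rw [hasDerivWithinAt_iff_tendsto_slope] at h
  have hset : Set.Ici (0:ℝ) \ {0} = Set.Ioi 0 := Set.Ici_sdiff_left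
  rw [hset] at h
  refine le_of_tendsto h ?_
  filter_upwards [self_mem_nhdsWithin] with x hx
  have hx0 : (0:ℝ) < x := hx
  have : g x - g 0 ≤ 0 := by have := hmax x hx0.le; linarith
  have hs : slope g 0 x = (g x - g 0) / x := by rw [slope_def_field]; ring_nf
  rw [hs]
  exact div_nonpos_of_nonpos_of_nonneg (by linarith) hx0.le

lemma pmp_deriv_zero (g : ℝ → ℝ) (a : ℝ) (ha : 0 < a)
    (hg : DifferentiableWithinAt ℝ g (Set.Ici 0) a)
    (hmax : ∀ b : ℝ, 0 ≤ b → g b ≤ g a) : derivWithin g (Set.Ici 0) a = 0 := by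
  have hnh : Set.Ici (0:ℝ) ∈ nhds a := Ici_mem_nhds ha
  have hda : DifferentiableAt ℝ g a := hg.differentiableAt hnh
  have hloc : IsLocalMax g a := by
    filter_upwards [hnh] with x hx using hmax x hx
  rw [derivWithin_of_mem_nhds hnh]
  exact hloc.deriv_eq_zero

lemma pmp_second_deriv_nonpos (g : ℝ → ℝ) (hg : ContDiffOn ℝ 2 g (Set.Ici 0))
    (a : ℝ) (ha : 0 ≤ a) (hmax : ∀ b : ℝ, 0 ≤ b → g b ≤ g a)
    (hd : derivWithin g (Set.Ici 0) a = 0) :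
    iteratedDerivWithin 2 g (Set.Ici 0) a ≤ 0 := by
  by_contra hpos
  push_neg at hpos
  have hu : UniqueDiffOn ℝ (Set.Ici (0:ℝ)) := uniqueDiffOn_Ici 0
  set g1 := derivWithin g (Set.Ici 0) with hg1
  set g2 := iteratedDerivWithin 2 g (Set.Ici 0) with hg2
  have hc2 : ContinuousOn g2 (Set.Ici 0) :=
    hg.continuousOn_iteratedDerivWithin le_rfl hu
  have hca : ContinuousWithinAt g2 (Set.Ici 0) a := hc2 a ha
  rw [ContinuousWithinAt, Metric.tendsto_nhdsWithin_nhds] at hca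
  obtain ⟨δ, hδ, hball⟩ := hca (g2 a) hpos
  set b := a + δ/2 with hb
  have hab : a < b := by simp [hb]; linarith
  have hbmem : ∀ x ∈ Set.Icc a b, x ∈ Set.Ici (0:ℝ) ∧ dist x a < δ := by
    intro x hx
    refine ⟨le_trans ha hx.1, ?_⟩
    rw [Real.dist_eq, abs_lt]
    constructor <;> [linarith [hx.1]; skip]
    have := hx.2; simp [hb] at this; linarith
  have hg2pos : ∀ x ∈ Set.Icc a b, 0 < g2 x := by
    intro x hx
    obtain ⟨hx1, hx2⟩ := hbmem x hx
    have := hball hx1 hx2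
    rw [Real.dist_eq] at this
    have := abs_lt.mp this
    linarith [this.1]
  have hg1diff : DifferentiableOn ℝ g1 (Set.Ici 0) := by
    have h1 := hg.differentiableOn_iteratedDerivWithin (m := 1) (by norm_num) hu
    exact h1.congr fun x hx => congrFun iteratedDerivWithin_one.symm x
  have hnh : ∀ x ∈ Set.Ioo a b, Set.Ici (0:ℝ) ∈ nhds x := by
    intro x hx
    exact Ici_mem_nhds (lt_of_le_of_lt ha hx.1)
  have hderivg1 : ∀ x ∈ Set.Ioo a b, deriv g1 x = g2 x := by
    intro x hx
    have hx0 : x ∈ Set.Ici (0:ℝ) := le_of_lt (lt_of_le_of_lt ha hx.1)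
    rw [← derivWithin_of_mem_nhds (hnh x hx)]
    have h2 : g2 x = derivWithin (iteratedDerivWithin 1 g (Set.Ici 0)) (Set.Ici 0) x :=
      congrFun iteratedDerivWithin_succ x
    rw [h2]
    exact derivWithin_congr (fun y hy => congrFun iteratedDerivWithin_one.symm y)
      (congrFun iteratedDerivWithin_one.symm x)
  have hmono1 : StrictMonoOn g1 (Set.Icc a b) := by
    apply strictMonoOn_of_deriv_pos (convex_Icc a b)
    · exact hg1diff.continuousOn.mono fun x hx => (hbmem x hx).1
    · intro x hx
      rw [interior_Icc] at hx
      rw [hderivg1 x hx]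
      exact hg2pos x (Set.mem_Icc.mpr ⟨hx.1.le, hx.2.le⟩)
  have hg1pos : ∀ x ∈ Set.Ioo a b, 0 < g1 x := by
    intro x hx
    have := hmono1 (Set.left_mem_Icc.mpr hab.le) (Set.mem_Icc.mpr ⟨hx.1.le, hx.2.le⟩) hx.1
    rw [hd] at this
    exact this
  have hmono : StrictMonoOn g (Set.Icc a b) := by
    apply strictMonoOn_of_deriv_pos (convex_Icc a b)
    · exact hg.continuousOn.mono fun x hx => (hbmem x hx).1
    · intro x hx
      rw [interior_Icc] at hx
      rw [← derivWithin_of_mem_nhds (hnh x hx)]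
      exact hg1pos x hx
  have hgb : g a < g b :=
    hmono (Set.left_mem_Icc.mpr hab.le) (Set.right_mem_Icc.mpr hab.le) hab
  have := hmax b (le_trans ha hab.le)
  linarith


/-- The operator `L^γ` satisfies the positive maximum principle: for
every `γ ∈ [0,∞]` and `f ∈ 𝒟^γ`, if `x₀ ∈ ℝ̈` is such that `sup f = f(x₀) ≥ 0`, then
`L^γ f(x₀) ≤ 0`, i.e. `f''(x₀) ≤ 0`. -/
theorem positive_maximum_principle (γ : ℝ≥0∞) (σ2 : ℝ) (hσ : 0 < σ2)
    (f : DomGamma γ) (x₀ : Rddot)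
    (hmax : ∀ y : Rddot, f.eval y ≤ f.eval x₀) (hpos : 0 ≤ f.eval x₀) :
    generator γ σ2 f x₀ ≤ 0 ∧ f.d2 x₀ ≤ 0 := by
  obtain ⟨side, a⟩ := x₀
  have hγ0 : (0:ℝ) ≤ γ.toReal := ENNReal.toReal_nonneg
  suffices hd2 : f.d2 ⟨side, a⟩ ≤ 0 by
    refine ⟨?_, hd2⟩
    unfold generator
    exact mul_nonpos_iff.mpr (Or.inl ⟨by positivity, hd2⟩)
  cases side with
  | true =>
    have hmaxpos : ∀ b : ℝ, 0 ≤ b → f.pos b ≤ f.pos (a:ℝ) := by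
      intro b hb
      have := hmax ⟨true, b.toNNReal⟩
      simpa [DomGamma.eval, Rddot.abs, Real.coe_toNNReal b hb] using this
    have hmaxneg : ∀ b : ℝ, 0 ≤ b → f.neg b ≤ f.pos (a:ℝ) := by
      intro b hb
      have := hmax ⟨false, b.toNNReal⟩
      simpa [DomGamma.eval, Rddot.abs, Real.coe_toNNReal b hb] using this
    have hdiff : DifferentiableWithinAt ℝ f.pos (Set.Ici 0) (a:ℝ) :=
      (f.contDiff_pos.differentiableOn (by norm_num)) (a:ℝ) a.coe_nonneg
    have hd : derivWithin f.pos (Set.Ici 0) (a:ℝ) = 0 := by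
      rcases eq_or_lt_of_le a.coe_nonneg with h0 | hlt
      · rw [← h0] at hmaxpos hmaxneg hdiff ⊢
        refine le_antisymm (pmp_deriv_nonpos f.pos hdiff hmaxpos) ?_
        by_cases hγ : γ = ⊤
        · have ht := f.transmission
          rw [if_pos hγ] at ht
          rw [← f.deriv_eq]
          have hdn : DifferentiableWithinAt ℝ f.neg (Set.Ici 0) 0 :=
            (f.contDiff_neg.differentiableOn (by norm_num)) 0 Set.self_mem_Ici
          have : derivWithin f.neg (Set.Ici 0) 0 ≤ 0 := by
            apply pmp_deriv_nonpos f.neg hdn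
            intro b hb
            calc f.neg b ≤ f.pos 0 := hmaxneg b hb
            _ = f.neg 0 := ht
          linarith
        · have ht := f.transmission
          rw [if_neg hγ] at ht
          rw [ht]
          have := hmaxneg 0 le_rfl
          exact mul_nonneg hγ0 (by linarith)
      · exact pmp_deriv_zero f.pos (a:ℝ) hlt hdiff hmaxpos
    have := pmp_second_deriv_nonpos f.pos f.contDiff_pos (a:ℝ) a.coe_nonneg hmaxpos hd
    simpa [DomGamma.d2, Rddot.abs] using this
  | false =>
    have hmaxneg : ∀ b : ℝ, 0 ≤ b → f.neg b ≤ f.neg (a:ℝ) := by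
      intro b hb
      have := hmax ⟨false, b.toNNReal⟩
      simpa [DomGamma.eval, Rddot.abs, Real.coe_toNNReal b hb] using this
    have hmaxpos : ∀ b : ℝ, 0 ≤ b → f.pos b ≤ f.neg (a:ℝ) := by
      intro b hb
      have := hmax ⟨true, b.toNNReal⟩
      simpa [DomGamma.eval, Rddot.abs, Real.coe_toNNReal b hb] using this
    have hdiff : DifferentiableWithinAt ℝ f.neg (Set.Ici 0) (a:ℝ) :=
      (f.contDiff_neg.differentiableOn (by norm_num)) (a:ℝ) a.coe_nonneg
    have hd : derivWithin f.neg (Set.Ici 0) (a:ℝ) = 0 := by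
      rcases eq_or_lt_of_le a.coe_nonneg with h0 | hlt
      · rw [← h0] at hmaxpos hmaxneg hdiff ⊢
        refine le_antisymm (pmp_deriv_nonpos f.neg hdiff hmaxneg) ?_
        have hpos' : derivWithin f.pos (Set.Ici 0) 0 ≤ 0 := by
          by_cases hγ : γ = ⊤
          · have ht := f.transmission
            rw [if_pos hγ] at ht
            have hdp : DifferentiableWithinAt ℝ f.pos (Set.Ici 0) 0 :=
              (f.contDiff_pos.differentiableOn (by norm_num)) 0 Set.self_mem_Ici
            apply pmp_deriv_nonpos f.pos hdp
            intro b hb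
            calc f.pos b ≤ f.neg 0 := hmaxpos b hb
            _ = f.pos 0 := ht.symm
          · have ht := f.transmission
            rw [if_neg hγ] at ht
            rw [ht]
            have := hmaxpos 0 le_rfl
            exact mul_nonpos_iff.mpr (Or.inl ⟨hγ0, by linarith⟩)
        have := f.deriv_eq
        linarith
      · exact pmp_deriv_zero f.neg (a:ℝ) hlt hdiff hmaxneg
    have := pmp_second_deriv_nonpos f.neg f.contDiff_neg (a:ℝ) a.coe_nonneg hmaxneg hd
    simpa [DomGamma.d2, Rddot.abs] using this


end
end

section
/- For every γ ∈ (0,∞), t > 0 and x ∈ ℝ̈, the function g_t(x,·) is a probability density on ℝ̈: g_t(x,y) ≥ 0 for all y, and ∫₀^∞ [G_t(x−y) + G_t(x+y) − 2γ ∫₀^∞ e^{−2γl} G_t(|x|+y+l) dl] dy + ∫₀^∞ 2γ ∫₀^∞ e^{−2γl} G_t(|x|+y+l) dl dy = 1. -/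
open MeasureTheory ProbabilityTheory Filter Set
open scoped NNReal ENNReal Topology

noncomputable section

section DensityHelpers

variable {t γ a b : ℝ}

lemma gaussK_nonneg (t z : ℝ) : 0 ≤ gaussK t z :=
  mul_nonneg (inv_nonneg.mpr (Real.sqrt_nonneg _)) (Real.exp_pos _).le

lemma gaussK_cont (t : ℝ) : Continuous (gaussK t) := by
  unfold gaussK; fun_prop

lemma gaussK_le (ht : 0 < t) (z : ℝ) : gaussK t z ≤ (Real.sqrt (2 * Real.pi * t))⁻¹ := by
  unfold gaussK
  nth_rewrite 2 [← mul_one ((Real.sqrt (2 * Real.pi * t))⁻¹)]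
  refine mul_le_mul_of_nonneg_left ?_ (inv_nonneg.mpr (Real.sqrt_nonneg _))
  rw [Real.exp_le_one_iff]
  apply div_nonpos_of_nonpos_of_nonneg (neg_nonpos.mpr (sq_nonneg z)) (by linarith)

lemma gaussK_anti {t u v : ℝ} (ht : 0 < t) (hu : 0 ≤ u) (huv : u ≤ v) :
    gaussK t v ≤ gaussK t u := by
  unfold gaussK
  refine mul_le_mul_of_nonneg_left ?_ (inv_nonneg.mpr (Real.sqrt_nonneg _))
  rw [Real.exp_le_exp]
  have hsq : u ^ 2 ≤ v ^ 2 := pow_le_pow_left₀ hu huv 2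
  have h2t : (0:ℝ) < 2 * t := by linarith
  exact div_le_div_of_nonneg_right (neg_le_neg hsq) h2t.le

lemma gaussK_exp_eq (t : ℝ) : ∀ z : ℝ, -(z ^ 2) / (2 * t) = -(1 / (2 * t)) * z ^ 2 := by
  intro z; ring

lemma gaussK_integrable {t : ℝ} (ht : 0 < t) : Integrable (gaussK t) := by
  have h : Integrable (fun z : ℝ => Real.exp (-(1 / (2 * t)) * z ^ 2)) :=
    integrable_exp_neg_mul_sq (by positivity)
  unfold gaussK
  simp_rw [gaussK_exp_eq t]
  exact h.const_mul _

lemma gaussK_integral {t : ℝ} (ht : 0 < t) : ∫ z, gaussK t z = 1 := by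
  simp_rw [gaussK, gaussK_exp_eq t]
  rw [MeasureTheory.integral_const_mul, integral_gaussian]
  rw [show Real.pi / (1 / (2 * t)) = 2 * Real.pi * t by field_simp]
  exact inv_mul_cancel₀ (Real.sqrt_ne_zero'.mpr (by positivity))

variable {γ a b : ℝ}

lemma barrier_integrandOn (hγ : 0 < γ) (ht : 0 < t) (c : ℝ) :
    IntegrableOn (fun l => Real.exp (-(2*γ*l)) * gaussK t (c + l)) (Set.Ioi 0) := by
  have hexp : IntegrableOn (fun l : ℝ => (Real.sqrt (2 * Real.pi * t))⁻¹ * Real.exp (-(2*γ) * l))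
      (Set.Ioi 0) := ((exp_neg_integrableOn_Ioi 0 (by positivity)).const_mul _)
  refine hexp.mono' ?_ ?_
  · exact (Continuous.mul (by fun_prop) ((gaussK_cont t).comp (by fun_prop))).aestronglyMeasurable
  · filter_upwards with l
    rw [Real.norm_eq_abs, abs_of_nonneg (mul_nonneg (Real.exp_pos _).le (gaussK_nonneg _ _))]
    rw [show -(2*γ) * l = -(2*γ*l) by ring, mul_comm ((Real.sqrt (2 * Real.pi * t))⁻¹)]
    exact mul_le_mul_of_nonneg_left (gaussK_le ht _) (Real.exp_pos _).le

lemma exp_int (hγ : 0 < γ) : ∫ l in Set.Ioi (0:ℝ), Real.exp (-(2*γ*l)) = (2*γ)⁻¹ := by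
  have h := integral_comp_mul_left_Ioi (fun x => Real.exp (-x)) 0 (show (0:ℝ) < 2*γ by positivity)
  simp only [mul_zero, smul_eq_mul] at h
  rw [show (fun l : ℝ => Real.exp (-(2*γ*l))) = fun l : ℝ => Real.exp (-(2*γ*l)) from rfl]
  calc ∫ l in Set.Ioi (0:ℝ), Real.exp (-(2*γ*l)) = ∫ l in Set.Ioi (0:ℝ), (fun x => Real.exp (-x)) (2*γ*l) := by
        norm_num
    _ = (2*γ)⁻¹ * ∫ x in Set.Ioi (0:ℝ), Real.exp (-x) := h
    _ = (2*γ)⁻¹ := by rw [integral_exp_neg_Ioi_zero, mul_one]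

lemma barrierInt_nonneg (γ t a b : ℝ) : 0 ≤ barrierInt γ t a b :=
  setIntegral_nonneg measurableSet_Ioi fun l _ =>
    mul_nonneg (Real.exp_pos _).le (gaussK_nonneg _ _)

lemma exp_integrableOn (hγ : 0 < γ) :
    IntegrableOn (fun l : ℝ => Real.exp (-(2*γ*l))) (Set.Ioi 0) := by
  have h2 : (fun l : ℝ => Real.exp (-(2*γ*l))) = fun l : ℝ => Real.exp (-(2*γ) * l) := by
    funext l; ring_nf
  rw [h2]
  exact exp_neg_integrableOn_Ioi 0 (by positivity)

lemma barrierInt_le (hγ : 0 < γ) (ht : 0 < t) (hab : 0 ≤ a + b) :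
    2*γ*barrierInt γ t a b ≤ gaussK t (a + b) := by
  have key : barrierInt γ t a b ≤ ∫ l in Set.Ioi (0:ℝ), Real.exp (-(2*γ*l)) * gaussK t (a+b) := by
    refine setIntegral_mono_on (barrier_integrandOn hγ ht _)
      ((exp_integrableOn hγ).mul_const _) measurableSet_Ioi ?_
    intro l hl
    exact mul_le_mul_of_nonneg_left
      (gaussK_anti ht hab (le_add_of_nonneg_right (le_of_lt hl))) (Real.exp_pos _).le
  have hint : ∫ l in Set.Ioi (0:ℝ), Real.exp (-(2*γ*l)) * gaussK t (a+b)
      = (2*γ)⁻¹ * gaussK t (a+b) := by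
    rw [MeasureTheory.integral_mul_const, exp_int hγ]
  calc 2*γ*barrierInt γ t a b ≤ 2*γ*((2*γ)⁻¹ * gaussK t (a+b)) := by
        rw [← hint]; exact mul_le_mul_of_nonneg_left key (by positivity)
    _ = gaussK t (a+b) := by
        rw [← mul_assoc, mul_inv_cancel₀ (by positivity), one_mul]

lemma barrierInt_smeas (hγ : 0 < γ) (ht : 0 < t) (a : ℝ) :
    StronglyMeasurable (fun b => barrierInt γ t a b) := by
  have hcont : Continuous (fun p : ℝ × ℝ => Real.exp (-(2*γ*p.2)) * gaussK t (a + p.1 + p.2)) := by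
    exact (Continuous.mul (by fun_prop) ((gaussK_cont t).comp (by fun_prop)))
  exact hcont.stronglyMeasurable.integral_prod_right' (ν := volume.restrict (Set.Ioi 0))

theorem main_integral (hγ : 0 < γ) (ht : 0 < t) (ha : 0 ≤ a) :
    (∫ yv in Set.Ioi (0:ℝ), transDens γ t a yv true) +
      (∫ yv in Set.Ioi (0:ℝ), transDens γ t a yv false) = 1 := by
  set h : ℝ → ℝ := fun b => 2*γ*barrierInt γ t a b with hh
  have hA : IntegrableOn (fun b => gaussK t (a - b)) (Set.Ioi 0) := by
    have he : (fun b : ℝ => gaussK t (a - b)) = fun b => gaussK t (b - a) := by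
      funext b; unfold gaussK; ring_nf
    rw [he]
    exact ((gaussK_integrable ht).comp_sub_right a).integrableOn
  have hB : IntegrableOn (fun b => gaussK t (a + b)) (Set.Ioi 0) := by
    have he : (fun b : ℝ => gaussK t (a + b)) = fun b => gaussK t (b - (-a)) := by
      funext b; ring_nf
    rw [he]
    exact ((gaussK_integrable ht).comp_sub_right (-a)).integrableOn
  have hD : IntegrableOn h (Set.Ioi 0) := by
    refine hB.mono' ((barrierInt_smeas hγ ht a).const_mul _).aestronglyMeasurable ?_
    rw [ae_restrict_iff' measurableSet_Ioi]
    filter_upwards with b hb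
    rw [Real.norm_eq_abs,
      abs_of_nonneg (mul_nonneg (by positivity) (barrierInt_nonneg γ t a b))]
    exact barrierInt_le hγ ht (add_nonneg ha hb.le)
  have e1 : ∫ yv in Set.Ioi (0:ℝ), transDens γ t a yv true
      = (∫ yv in Set.Ioi (0:ℝ), (gaussK t (a - yv) + gaussK t (a + yv)))
        - ∫ yv in Set.Ioi (0:ℝ), h yv := by
    have hco : ∀ yv : ℝ, transDens γ t a yv true
        = (gaussK t (a - yv) + gaussK t (a + yv)) - h yv := by
      intro yv; rfl
    simp_rw [hco]
    exact MeasureTheory.integral_sub (hA.add hB) hD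
  have e2 : ∫ yv in Set.Ioi (0:ℝ), transDens γ t a yv false
      = ∫ yv in Set.Ioi (0:ℝ), h yv := by
    simp [transDens, hh]
  rw [e1, e2, sub_add_cancel, MeasureTheory.integral_add hA hB]
  have i2 : ∫ b in Set.Ioi (0:ℝ), gaussK t (a + b) = ∫ u in Set.Ioi a, gaussK t u := by
    have mp : MeasurePreserving (fun b : ℝ => b + a) volume volume :=
      measurePreserving_add_right volume a
    have emb : MeasurableEmbedding (fun b : ℝ => b + a) :=
      (Homeomorph.addRight a).measurableEmbedding
    have pre : (fun b : ℝ => b + a) ⁻¹' (Set.Ioi a) = Set.Ioi 0 := by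
      ext b; simp [Set.mem_Ioi]
    have := mp.setIntegral_preimage_emb emb (gaussK t) (Set.Ioi a)
    rw [pre] at this
    rw [← this]
    simp_rw [add_comm]
  have i1 : ∫ b in Set.Ioi (0:ℝ), gaussK t (a - b) = ∫ u in Set.Iic a, gaussK t u := by
    have hinv : Function.Involutive (fun b : ℝ => a - b) := fun b => by ring
    have mp : MeasurePreserving (fun b : ℝ => a - b) volume volume := by
      simpa [sub_eq_add_neg, Function.comp_def] using (measurePreserving_add_left (volume : Measure ℝ) a).comp
        (Measure.measurePreserving_neg (volume : Measure ℝ))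
    have emb : MeasurableEmbedding (fun b : ℝ => a - b) :=
      (MeasurableEquiv.ofInvolutive _ hinv (by fun_prop)).measurableEmbedding
    have pre : (fun b : ℝ => a - b) ⁻¹' (Set.Iio a) = Set.Ioi 0 := by
      ext b; simp [Set.mem_Ioi, Set.mem_Iio, sub_lt_self_iff]
    have := mp.setIntegral_preimage_emb emb (gaussK t) (Set.Iio a)
    rw [pre] at this
    rw [this]
    exact setIntegral_congr_set Iio_ae_eq_Iic
  rw [i1, i2, intervalIntegral.integral_Iic_add_Ioi ((gaussK_integrable ht).integrableOn)
    ((gaussK_integrable ht).integrableOn), gaussK_integral ht]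

theorem main_nonneg (hγ : 0 < γ) (ht : 0 < t) (ha : 0 ≤ a) (hb : 0 ≤ b) (same : Bool) :
    0 ≤ transDens γ t a b same := by
  cases same
  · simpa [transDens] using mul_nonneg (by positivity) (barrierInt_nonneg γ t a b)
  · rw [show transDens γ t a b true
        = gaussK t (a - b) + gaussK t (a + b) - 2*γ*barrierInt γ t a b from rfl]
    have h1 := barrierInt_le hγ ht (add_nonneg ha hb)
    have h2 := gaussK_nonneg t (a - b)
    linarith

end DensityHelpers

/-- For every `γ ∈ (0,∞)`, `t > 0` and `x ∈ ℝ̈`, the function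
`g_t(x,·)` is a probability density on `ℝ̈`: it is nonnegative, and
`∫₀^∞ [G_t(x-y) + G_t(x+y) - 2γ∫₀^∞ e^{-2γl}G_t(|x|+y+l)dl] dy
+ ∫₀^∞ 2γ∫₀^∞ e^{-2γl}G_t(|x|+y+l)dl dy = 1`. -/
theorem transition_density_is_probability_density (γ : ℝ) (hγ : 0 < γ) (t : ℝ) (ht : 0 < t)
    (x : Rddot) :
    (∀ y : Rddot, 0 ≤ transDens γ t x.abs y.abs (y.side == x.side)) ∧
    (∫ yv in Set.Ioi (0:ℝ), transDens γ t x.abs yv true) +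
      (∫ yv in Set.Ioi (0:ℝ), transDens γ t x.abs yv false) = 1 := by
  constructor
  · intro y
    exact main_nonneg hγ ht (NNReal.coe_nonneg x.rad) (NNReal.coe_nonneg y.rad) _
  · exact main_integral hγ ht (NNReal.coe_nonneg x.rad)

end
end

section
/- (Skorokhod's lemma.) Let f : ℝ₊ → ℝ be continuous with f(0) ≥ 0. There exists a unique continuous function l : ℝ₊ → ℝ such that (i) X(t) := l(t) + f(t) ≥ 0 for all t ≥ 0; (ii) l(0) = 0 and l is non-decreasing; (iii) ∫₀^∞ 1_{X(t) > 0} dl(t) = 0 (l increases only when X = 0). Moreover this l is given explicitly by l(t) = sup_{0≤s≤t} (f(s))⁻, where z⁻ = max(−z, 0). -/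
open MeasureTheory ProbabilityTheory Filter Set
open scoped NNReal ENNReal Topology

noncomputable section

/-- A function `l` solves the Skorokhod problem for `f` (on `ℝ₊`, with everything
extended by `0` to negative times): `l` is continuous, non-decreasing, vanishes at `0`,
`X(t) = l(t) + f(t) ≥ 0` for `t ≥ 0`, and the Stieltjes measure `dl` does not charge
`{X > 0}`. -/
def SkorokhodSol (f l : ℝ → ℝ) : Prop :=
  ∃ (hm : Monotone l) (hc : Continuous l),
    (∀ t : ℝ, t ≤ 0 → l t = 0) ∧
    (∀ t : ℝ, 0 ≤ t → 0 ≤ l t + f t) ∧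
    ({ toFun := l, mono' := hm,
       right_continuous' := fun _ => hc.continuousAt.continuousWithinAt
       : StieltjesFunction ℝ }).measure {t : ℝ | 0 ≤ t ∧ 0 < l t + f t} = 0


section SkAux

variable (f : ℝ → ℝ)

/-- `g(s) = (f s)⁻`. -/
def skG (s : ℝ) : ℝ := max (-f s) 0

/-- The running supremum of `skG` on `[0,t]`. -/
def skL (t : ℝ) : ℝ := sSup (skG f '' Set.Icc 0 t)

variable {f}

lemma skG_nonneg (s : ℝ) : 0 ≤ skG f s := le_max_right _ _

lemma skG_cont (hf : ContinuousOn f (Set.Ici 0)) : ContinuousOn (skG f) (Set.Ici 0) :=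
  fun x hx => ((hf x hx).neg).max continuousWithinAt_const

lemma skG_bdd (hf : ContinuousOn f (Set.Ici 0)) {a b : ℝ} (ha : 0 ≤ a) :
    BddAbove (skG f '' Set.Icc a b) :=
  isCompact_Icc.bddAbove_image <|
    (skG_cont hf).mono (fun x hx => le_trans ha hx.1)

lemma skL_bdd (hf : ContinuousOn f (Set.Ici 0)) (t : ℝ) : BddAbove (skG f '' Set.Icc 0 t) :=
  skG_bdd hf le_rfl

lemma le_skL (hf : ContinuousOn f (Set.Ici 0)) {s t : ℝ} (hs : 0 ≤ s) (hst : s ≤ t) :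
    skG f s ≤ skL f t :=
  le_csSup (skL_bdd hf t) ⟨s, ⟨hs, hst⟩, rfl⟩

lemma skL_nonpos_eq_zero (hf0 : 0 ≤ f 0) {t : ℝ} (ht : t ≤ 0) : skL f t = 0 := by
  rcases eq_or_lt_of_le ht with h | h
  · have : Set.Icc (0:ℝ) t = {0} := by rw [h]; exact Set.Icc_self 0
    rw [skL, this, Set.image_singleton, csSup_singleton]
    simp [skG, hf0, max_eq_right, neg_nonpos.mpr hf0]
  · rw [skL, Set.Icc_eq_empty (not_le.mpr h), Set.image_empty, Real.sSup_empty]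

lemma skL_nonneg (hf : ContinuousOn f (Set.Ici 0)) (hf0 : 0 ≤ f 0) (t : ℝ) : 0 ≤ skL f t := by
  rcases le_or_gt 0 t with h | h
  · exact le_trans (skG_nonneg 0) (le_skL hf le_rfl h)
  · rw [skL_nonpos_eq_zero hf0 h.le]

lemma skL_mono (hf : ContinuousOn f (Set.Ici 0)) (hf0 : 0 ≤ f 0) : Monotone (skL f) := by
  intro s t hst
  rcases lt_or_ge s 0 with h | h
  · rw [skL_nonpos_eq_zero hf0 h.le]; exact skL_nonneg hf hf0 t
  · exact csSup_le_csSup (skL_bdd hf t) ⟨skG f 0, 0, ⟨le_rfl, h⟩, rfl⟩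
      (Set.image_mono (Set.Icc_subset_Icc_right hst))

lemma skL_split (hf : ContinuousOn f (Set.Ici 0)) {s t : ℝ} (hs : 0 ≤ s) (hst : s ≤ t) :
    skL f t = max (skL f s) (sSup (skG f '' Set.Icc s t)) := by
  rw [skL, ← Set.Icc_union_Icc_eq_Icc hs hst, Set.image_union,
    csSup_union (skL_bdd hf s) ⟨skG f 0, 0, ⟨le_rfl, hs⟩, rfl⟩ (skG_bdd hf hs)
      ⟨skG f s, s, ⟨le_rfl, hst⟩, rfl⟩]
  rfl

lemma skL_modulus (hf : ContinuousOn f (Set.Ici 0)) {T ε : ℝ} (hT : 0 ≤ T) (hε : 0 < ε) :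
    ∃ δ > 0, ∀ s t : ℝ, 0 ≤ s → s ≤ t → t ≤ T → t - s < δ → skL f t ≤ skL f s + ε := by
  have huc : UniformContinuousOn (skG f) (Set.Icc 0 T) :=
    isCompact_Icc.uniformContinuousOn_of_continuous
      ((skG_cont hf).mono (fun x hx => hx.1))
  rw [Metric.uniformContinuousOn_iff] at huc
  obtain ⟨δ, hδ, hδ'⟩ := huc ε hε
  refine ⟨δ, hδ, fun s t hs hst htT hts => ?_⟩
  rw [skL_split hf hs hst]
  have hsub : Set.Icc s t ⊆ Set.Icc 0 T := Set.Icc_subset_Icc hs htT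
  have h2 : sSup (skG f '' Set.Icc s t) ≤ skG f s + ε := by
    apply csSup_le ((Set.nonempty_Icc.mpr hst).image _)
    rintro x ⟨u, hu, rfl⟩
    have : dist (skG f u) (skG f s) < ε :=
      hδ' u (hsub hu) s (hsub ⟨le_rfl, hst⟩) (by
        rw [Real.dist_eq, abs_of_nonneg (sub_nonneg.mpr hu.1)]
        exact lt_of_le_of_lt (by linarith [hu.2]) hts)
    have := abs_lt.mp (Real.dist_eq _ _ ▸ this)
    linarith [this.1]
  have hgs : skG f s ≤ skL f s := le_skL hf hs le_rfl
  exact max_le (by linarith) (by linarith)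

lemma skL_cont (hf : ContinuousOn f (Set.Ici 0)) (hf0 : 0 ≤ f 0) : Continuous (skL f) := by
  rw [continuous_iff_continuousAt]
  intro t₀
  rw [Metric.continuousAt_iff]
  intro ε hε
  rcases lt_or_ge t₀ 0 with ht₀ | ht₀
  · refine ⟨-t₀, by linarith, fun {s} hs => ?_⟩
    rw [Real.dist_eq] at hs
    have hs0 : s ≤ 0 := by rcases abs_lt.mp hs with ⟨h1, h2⟩; linarith
    rw [skL_nonpos_eq_zero hf0 hs0, skL_nonpos_eq_zero hf0 ht₀.le]
    simpa using hε
  · obtain ⟨δ, hδ, hδ'⟩ := skL_modulus hf (T := t₀ + 1) (ε := ε/2) (by linarith) (by linarith)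
    refine ⟨min δ 1, lt_min hδ one_pos, fun {s} hs => ?_⟩
    rw [Real.dist_eq] at hs
    have hs1 : |s - t₀| < δ := lt_of_lt_of_le hs (min_le_left _ _)
    have hs2 : |s - t₀| < 1 := lt_of_lt_of_le hs (min_le_right _ _)
    rcases abs_lt.mp hs1 with ⟨ha1, ha2⟩
    rcases abs_lt.mp hs2 with ⟨hb1, hb2⟩
    have hmono := skL_mono hf hf0
    rw [Real.dist_eq]
    rcases le_or_gt t₀ s with hc | hc
    · have := hδ' t₀ s ht₀ hc (by linarith) (by linarith)
      have h2 : skL f t₀ ≤ skL f s := hmono hc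
      rw [abs_of_nonneg (by linarith)]; linarith
    · rcases le_or_gt 0 s with hd | hd
      · have := hδ' s t₀ hd hc.le (by linarith) (by linarith)
        have h2 : skL f s ≤ skL f t₀ := hmono hc.le
        rw [abs_of_nonpos (by linarith)]; linarith
      · have := hδ' 0 t₀ le_rfl ht₀ (by linarith) (by linarith)
        rw [skL_nonpos_eq_zero hf0 hd.le]
        rw [skL_nonpos_eq_zero hf0 le_rfl] at this
        have h3 := skL_nonneg hf hf0 t₀
        rw [abs_of_nonpos (by linarith)]; linarith

lemma skL_locally_const (hf : ContinuousOn f (Set.Ici 0)) (hf0 : 0 ≤ f 0) {t : ℝ}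
    (ht : 0 ≤ t) (hpos : 0 < skL f t + f t) :
    ∃ δ > 0, ∀ s ∈ Set.Icc (t - δ) (t + δ), skL f s = skL f t := by
  have hmono := skL_mono hf hf0
  have hLnn := skL_nonneg hf hf0 t
  -- right constancy
  have hright : ∃ δ > 0, ∀ s ∈ Set.Icc t (t + δ), skL f s = skL f t := by
    have hev : {s : ℝ | -skL f t < f s} ∈ nhdsWithin t (Set.Ici 0) :=
      (hf t ht).preimage_mem_nhdsWithin (Ioi_mem_nhds (by linarith))
    rw [Metric.mem_nhdsWithin_iff] at hev
    obtain ⟨r, hr, hrsub⟩ := hev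
    refine ⟨r/2, by linarith, fun s hs => ?_⟩
    refine le_antisymm ?_ (hmono hs.1)
    rw [skL_split hf ht hs.1]
    refine max_le le_rfl (csSup_le ((Set.nonempty_Icc.mpr hs.1).image _) ?_)
    rintro x ⟨u, hu, rfl⟩
    have humem : u ∈ Metric.ball t r ∩ Set.Ici 0 := by
      constructor
      · rw [Metric.mem_ball, Real.dist_eq, abs_of_nonneg (by linarith [hu.1])]
        linarith [hu.2, hs.2]
      · exact le_trans ht hu.1
    have := hrsub humem
    exact max_le (by linarith [Set.mem_setOf_eq ▸ this]) hLnn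
  obtain ⟨δ₁, hδ₁, hR⟩ := hright
  -- left constancy
  have hleft : ∃ δ > 0, ∀ s ∈ Set.Icc (t - δ) t, skL f s = skL f t := by
    rcases eq_or_lt_of_le hLnn with hz | hz
    · refine ⟨1, one_pos, fun s hs => ?_⟩
      have h1 : skL f s ≤ skL f t := hmono hs.2
      have h2 : 0 ≤ skL f s := skL_nonneg hf hf0 s
      linarith [hz]
    · -- skL f t > 0, hence t > 0
      have htpos : 0 < t := by
        rcases eq_or_lt_of_le ht with h | h
        · exfalso; rw [← h, skL_nonpos_eq_zero hf0 le_rfl] at hz; exact lt_irrefl 0 hz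
        · exact h
      have hgt : skG f t < skL f t := by
        apply max_lt (by linarith) hz
      set c := (skG f t + skL f t) / 2 with hc
      have hcl : c < skL f t := by rw [hc]; linarith
      have hgc : skG f t < c := by rw [hc]; linarith
      have hcont : ContinuousAt (skG f) t :=
        ((skG_cont hf) t htpos.le).continuousAt (Ici_mem_nhds htpos)
      have hev : {u : ℝ | skG f u < c} ∈ nhds t := hcont (Iio_mem_nhds hgc)
      rw [Metric.mem_nhds_iff] at hev
      obtain ⟨r, hr, hrsub⟩ := hev
      refine ⟨min (r/2) (t/2), lt_min (by linarith) (by linarith), fun s hs => ?_⟩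
      have hs0 : 0 ≤ s := by
        have := hs.1
        have h1 : min (r/2) (t/2) ≤ t/2 := min_le_right _ _
        linarith
      refine le_antisymm (hmono hs.2) ?_
      have hsplit := skL_split hf hs0 hs.2
      have h2 : sSup (skG f '' Set.Icc s t) ≤ c := by
        apply csSup_le ((Set.nonempty_Icc.mpr hs.2).image _)
        rintro x ⟨u, hu, rfl⟩
        have : u ∈ Metric.ball t r := by
          rw [Metric.mem_ball, Real.dist_eq, abs_of_nonpos (by linarith [hu.2])]
          have h1 : min (r/2) (t/2) ≤ r/2 := min_le_left _ _
          have := hs.1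
          linarith [hu.1]
        exact (hrsub this).le
      rcases le_or_gt (skL f t) (skL f s) with h | h
      · exact h
      · exfalso
        have hmax : max (skL f s) (sSup (skG f '' Set.Icc s t)) < skL f t :=
          max_lt h (lt_of_le_of_lt h2 hcl)
        rw [← hsplit] at hmax
        exact lt_irrefl _ hmax
  obtain ⟨δ₂, hδ₂, hL⟩ := hleft
  refine ⟨min δ₁ δ₂, lt_min hδ₁ hδ₂, fun s hs => ?_⟩
  rcases le_or_gt s t with h | h
  · exact hL s ⟨by linarith [hs.1, min_le_right δ₁ δ₂], h⟩
  · exact hR s ⟨h.le, by linarith [hs.2, min_le_left δ₁ δ₂]⟩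

lemma skL_eq_iSup (t : ℝ) : skL f t = ⨆ s : Set.Icc (0:ℝ) t, max (-(f s)) 0 := by
  rw [iSup]
  exact congrArg sSup (Set.image_eq_range (fun s => max (-(f s)) 0) (Set.Icc 0 t))


end SkAux


section SkAux2
variable {f : ℝ → ℝ}

lemma skL_solves (hf : ContinuousOn f (Set.Ici 0)) (hf0 : 0 ≤ f 0) :
    SkorokhodSol f (skL f) := by
  refine ⟨skL_mono hf hf0, skL_cont hf hf0, fun t ht => skL_nonpos_eq_zero hf0 ht,
    fun t ht => ?_, ?_⟩
  · have h1 : skG f t ≤ skL f t := le_skL hf ht le_rfl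
    have h2 : -f t ≤ skG f t := le_max_left _ _
    linarith
  · apply measure_null_of_locally_null
    rintro t ⟨ht0, htpos⟩
    obtain ⟨δ, hδ, hconst⟩ := skL_locally_const hf hf0 ht0 htpos
    refine ⟨Set.Ioo (t - δ) (t + δ),
      mem_nhdsWithin_of_mem_nhds (Ioo_mem_nhds (by linarith) (by linarith)), ?_⟩
    apply measure_mono_null Set.Ioo_subset_Ioc_self
    rw [StieltjesFunction.measure_Ioc]
    have h1 := hconst (t - δ) ⟨le_rfl, by linarith⟩
    have h2 := hconst (t + δ) ⟨by linarith, le_rfl⟩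
    show ENNReal.ofReal (skL f (t + δ) - skL f (t - δ)) = 0
    rw [h1, h2]
    simp

lemma skorokhod_char (hf : ContinuousOn f (Set.Ici 0)) (hf0 : 0 ≤ f 0) {l : ℝ → ℝ}
    (hl : SkorokhodSol f l) {t : ℝ} (ht : 0 ≤ t) : l t = skL f t := by
  obtain ⟨hm, hc, hz, hp, hμ⟩ := hl
  have hl0 : l 0 = 0 := hz 0 le_rfl
  have hle : skL f t ≤ l t := by
    apply csSup_le ((Set.nonempty_Icc.mpr ht).image _)
    rintro x ⟨s, hs, rfl⟩
    have h1 : 0 ≤ l s + f s := hp s hs.1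
    have h2 : l s ≤ l t := hm hs.2
    have h3 : (0:ℝ) ≤ l t := hl0 ▸ hm ht
    exact max_le (by linarith) h3
  refine le_antisymm ?_ hle
  by_contra hlt
  push_neg at hlt
  set A := Set.Icc 0 t ∩ l ⁻¹' Set.Iic (skL f t) with hA
  have hAne : A.Nonempty := ⟨0, ⟨le_rfl, ht⟩, by
    simp only [Set.mem_preimage, Set.mem_Iic, hl0]; exact skL_nonneg hf hf0 t⟩
  have hAbdd : BddAbove A := BddAbove.mono Set.inter_subset_left bddAbove_Icc
  have hAcl : IsClosed A := isClosed_Icc.inter (isClosed_Iic.preimage hc)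
  set u := sSup A with hu
  have huA : u ∈ A := hAcl.csSup_mem hAne hAbdd
  have hu0 : (0:ℝ) ≤ u := huA.1.1
  have hut : u ≤ t := huA.1.2
  have hlu : l u ≤ skL f t := huA.2
  have hsub : Set.Ioc u t ⊆ {s : ℝ | 0 ≤ s ∧ 0 < l s + f s} := by
    intro s hs
    have hs0 : 0 ≤ s := le_trans hu0 hs.1.le
    have hls : skL f t < l s := by
      by_contra h
      push_neg at h
      exact absurd (le_csSup hAbdd (⟨⟨hs0, hs.2⟩, h⟩ : s ∈ A)) (not_le.mpr hs.1)
    have h4 : -f s ≤ skL f t := le_trans (le_max_left _ _) (le_skL hf hs0 hs.2)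
    exact ⟨hs0, by linarith⟩
  have h0 := measure_mono_null hsub hμ
  rw [StieltjesFunction.measure_Ioc] at h0
  have h5 : l t - l u ≤ 0 := ENNReal.ofReal_eq_zero.mp h0
  linarith

end SkAux2

/-- **Skorokhod's lemma.** Let `f : ℝ₊ → ℝ` be continuous with
`f(0) ≥ 0`. There is a unique continuous function `l` with (i) `X(t) := l(t) + f(t) ≥ 0`
for all `t ≥ 0`; (ii) `l(0) = 0` and `l` non-decreasing; (iii) `∫₀^∞ 1_{X(t)>0} dl(t) = 0`.
Moreover `l(t) = sup_{0 ≤ s ≤ t} (f(s))⁻`. -/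
theorem skorokhod_lemma (f : ℝ → ℝ) (hf : ContinuousOn f (Set.Ici 0)) (hf0 : 0 ≤ f 0) :
    (∃! l : ℝ → ℝ, SkorokhodSol f l) ∧
    ∀ l : ℝ → ℝ, SkorokhodSol f l → ∀ t : ℝ, 0 ≤ t →
      l t = ⨆ s : Set.Icc (0:ℝ) t, max (-(f s)) 0 := by
  have hchar : ∀ l : ℝ → ℝ, SkorokhodSol f l → ∀ t : ℝ, 0 ≤ t →
      l t = ⨆ s : Set.Icc (0:ℝ) t, max (-(f s)) 0 := by
    intro l hl t ht
    rw [← skL_eq_iSup]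
    exact skorokhod_char hf hf0 hl ht
  refine ⟨⟨skL f, skL_solves hf hf0, ?_⟩, hchar⟩
  intro l' hl'
  funext t
  rcases le_or_gt 0 t with ht | ht
  · rw [skorokhod_char hf hf0 hl' ht]
  · obtain ⟨_, _, hz, _, _⟩ := hl'
    rw [hz t ht.le, skL_nonpos_eq_zero hf0 ht.le]


end
end
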